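/- (Strong clustering of the mean output state.) Fix l₀, m ≥ 1 and a density matrix ρ̄ on H^{⊗l₀}. Then for all operators A, B ∈ B(K^{⊗m l₀}), lim_{k→∞} Tr[ Φ^{((2m+k) l₀)}(ρ̄^{⊗(2m+k)}) (A ⊗ 1_{K^{⊗k l₀}} ⊗ B) ] = Tr[Φ^{(m l₀)}(ρ̄^{⊗m}) A] · Tr[Φ^{(m l₀)}(ρ̄^{⊗m}) B]. -/

import Mathlib

open Matrix Filter
open scoped BigOperators ComplexOrder

noncomputable section

/-- Operators on the `n`-fold tensor power of a `d`-dimensional Hilbert space. -/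
abbrev MatPow (d n : ℕ) := Matrix (Fin n → Fin d) (Fin n → Fin d) ℂ

/-- A density matrix: positive semidefinite with unit trace. -/
def IsDensity {m : Type*} [Fintype m] (ρ : Matrix m m ℂ) : Prop :=
  ρ.PosSemidef ∧ ρ.trace = 1

/-- Loewner order `A ≤ B`. -/
def Loewner {m : Type*} [Fintype m] (A B : Matrix m m ℂ) : Prop := (B - A).PosSemidef

/-- An orthogonal projection. -/
def IsProjection {m : Type*} [Fintype m] (P : Matrix m m ℂ) : Prop :=
  P.IsHermitian ∧ P * P = P

/-- Positive semidefinite square root (zero on non-PSD input). -/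
def psqrt {m : Type*} [Fintype m] [DecidableEq m] (A : Matrix m m ℂ) : Matrix m m ℂ :=
  letI := Classical.propDecidable A.PosSemidef
  if h : A.PosSemidef then
    (h.1.eigenvectorUnitary : Matrix m m ℂ) * diagonal ((↑) ∘ Real.sqrt ∘ h.1.eigenvalues) *
      (star h.1.eigenvectorUnitary : Matrix m m ℂ)
  else 0

/-- Fidelity `F(A,B) = Tr √(√A B √A)` of positive semidefinite operators. -/
def fidelity {m : Type*} [Fintype m] [DecidableEq m] (A B : Matrix m m ℂ) : ℝ :=
  ((psqrt (psqrt A * B * psqrt A)).trace).re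

/-- The trace norm `Tr |A| = Tr √(Aᴴ A)`. -/
def traceNorm {m : Type*} [Fintype m] [DecidableEq m] (A : Matrix m m ℂ) : ℝ :=
  ((psqrt (Aᴴ * A)).trace).re

/-- Von Neumann entropy `S(ρ) = -Tr(ρ log₂ ρ)` (via eigenvalues, base-2 logarithm). -/
def vnEntropy {m : Type*} [Fintype m] [DecidableEq m] (ρ : Matrix m m ℂ) : ℝ :=
  if h : ρ.IsHermitian then -∑ i, h.eigenvalues i * Real.logb 2 (h.eigenvalues i) else 0

/-- Linear maps from operators on an `a`-dimensional space to operators on a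
`b`-dimensional space. -/
abbrev QChannelMap (a b : ℕ) := Matrix (Fin a) (Fin a) ℂ →ₗ[ℂ] Matrix (Fin b) (Fin b) ℂ

/-- The Choi matrix of a linear map. -/
def choiMatrix {a b : ℕ} (Φ : QChannelMap a b) : Matrix (Fin a × Fin b) (Fin a × Fin b) ℂ :=
  Matrix.of fun p p' => Φ (Matrix.single p.1 p'.1 1) p.2 p'.2

/-- Completely positive (positive semidefinite Choi matrix) and trace preserving. -/
def IsCPTP {a b : ℕ} (Φ : QChannelMap a b) : Prop :=
  (choiMatrix Φ).PosSemidef ∧ ∀ ρ : Matrix (Fin a) (Fin a) ℂ, (Φ ρ).trace = ρ.trace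

/-- The `n`-fold tensor product map `Φs 0 ⊗ ⋯ ⊗ Φs (n-1)`. -/
def tensChan {a b : ℕ} (n : ℕ) (Φs : Fin n → QChannelMap a b) (ρ : MatPow a n) :
    MatPow b n :=
  Matrix.of fun y y' => ∑ x : Fin n → Fin a, ∑ x' : Fin n → Fin a,
    ρ x x' * ∏ k, Φs k (Matrix.single (x k) (x' k) 1) (y k) (y' k)

/-- The Markov weight `γ_{i₁} q_{i₁ i₂} ⋯ q_{i_{n-1} i_n}` of a trajectory. -/
def chainWt {I : Type*} (q : I → I → ℝ) (γ : I → ℝ) {n : ℕ} (i : Fin n → I) : ℝ :=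
  ∏ k : Fin n, if k.val = 0 then γ (i k)
    else q (i ⟨k.val - 1, Nat.lt_of_le_of_lt (Nat.pred_le _) k.isLt⟩) (i k)

/-- The memory channel `Φ^{(n)}` with Markovian correlated noise. -/
def memChan {I : Type*} [Fintype I] {a b : ℕ} (q : I → I → ℝ) (γ : I → ℝ)
    (Φ : I → QChannelMap a b) (n : ℕ) (ρ : MatPow a n) : MatPow b n :=
  ∑ i : Fin n → I, chainWt q γ i • tensChan n (fun k => Φ (i k)) ρ

/-- `γ_C = ∑_{i ∈ C} γ_i`. -/
def gammaC {I : Type*} [Fintype I] [DecidableEq I] (γ : I → ℝ) (C : Finset I) : ℝ :=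
  ∑ i ∈ C, γ i

/-- The channel `Φ_C^{(n)}` restricted to the class `C`. -/
def classChan {I : Type*} [Fintype I] [DecidableEq I] {a b : ℕ} (q : I → I → ℝ)
    (γ : I → ℝ) (Φ : I → QChannelMap a b) (C : Finset I) (n : ℕ) (ρ : MatPow a n) :
    MatPow b n :=
  (gammaC γ C)⁻¹ • ∑ i : Fin n → {x // x ∈ C},
    chainWt q γ (fun k => (i k : I)) • tensChan n (fun k => Φ (i k : I)) ρ

/-- The transition matrix of the Markov chain. -/
def qMatrix {I : Type*} [Fintype I] (q : I → I → ℝ) : Matrix I I ℝ := Matrix.of q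

/-- `j` is accessible from `i`. -/
def Accessible {I : Type*} [Fintype I] [DecidableEq I] (q : I → I → ℝ) (i j : I) : Prop :=
  ∃ n : ℕ, 0 < (qMatrix q ^ n) i j

/-- `i` and `j` communicate. -/
def Communicates {I : Type*} [Fintype I] [DecidableEq I] (q : I → I → ℝ) (i j : I) : Prop :=
  Accessible q i j ∧ Accessible q j i

/-- `C` is a communicating class. -/
def IsCommClass {I : Type*} [Fintype I] [DecidableEq I] (q : I → I → ℝ) (C : Finset I) :
    Prop :=
  ∃ i : I, ∀ j, j ∈ C ↔ Communicates q i j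

/-- The class `C` is aperiodic: for each of its states, the gcd of the return
times is `1`. -/
def IsAperiodicClass {I : Type*} [Fintype I] [DecidableEq I] (q : I → I → ℝ)
    (C : Finset I) : Prop :=
  ∀ i ∈ C, ∀ d : ℕ, (∀ n : ℕ, 0 < n → 0 < (qMatrix q ^ n) i i → d ∣ n) → d = 1

/-- The class `C` is a (deterministic) periodic cycle `i₀ → i₁ → ⋯ → i_{L-1} → i₀` of
period `L ≥ 2`, enumerated by the `L`-periodic function `e : ℕ → I`. -/
def IsPeriodicCycle {I : Type*} [Fintype I] [DecidableEq I] (q : I → I → ℝ)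
    (C : Finset I) (L : ℕ) (e : ℕ → I) : Prop :=
  2 ≤ L ∧ (∀ k, e (k + L) = e k) ∧ (∀ j, j ∈ C ↔ ∃ k < L, e k = j) ∧
    (∀ k k', k < L → k' < L → e k = e k' → k = k') ∧ ∀ k, q (e k) (e (k + 1)) = 1

/-- The branch channel `Φ_{C,i_k}^{(n)} = Φ_{i_k} ⊗ Φ_{i_{k+1}} ⊗ ⋯ ⊗ Φ_{i_{k+n-1}}`
of a periodic cycle enumerated by `e`, started at position `k`. -/
def cycleChan {I : Type*} {a b : ℕ} (Φ : I → QChannelMap a b) (e : ℕ → I) (k n : ℕ)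
    (ρ : MatPow a n) : MatPow b n :=
  tensChan n (fun r => Φ (e (k + r.val))) ρ

/-- A finite ensemble of density matrices. -/
def IsEnsemble {m : Type*} [Fintype m] {J : ℕ} (p : Fin J → ℝ)
    (ρ : Fin J → Matrix m m ℂ) : Prop :=
  (∀ j, 0 ≤ p j) ∧ ∑ j, p j = 1 ∧ ∀ j, IsDensity (ρ j)

/-- Mean Holevo quantity of an ensemble for an aperiodic class `C`. -/
def holevoAper {I : Type*} [Fintype I] [DecidableEq I] {a b : ℕ} (q : I → I → ℝ)
    (γ : I → ℝ) (Φ : I → QChannelMap a b) (C : Finset I) (n : ℕ) {J : ℕ}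
    (p : Fin J → ℝ) (ρ : Fin J → MatPow a n) : ℝ :=
  (1 / (n : ℝ)) * (vnEntropy (∑ j, p j • classChan q γ Φ C n (ρ j)) -
    ∑ j, p j * vnEntropy (classChan q γ Φ C n (ρ j)))

/-- Mean Holevo quantity of an ensemble for a periodic cycle of period `L`
enumerated by `e`. -/
def holevoCyc {I : Type*} {a b : ℕ} (Φ : I → QChannelMap a b) (e : ℕ → I) (L n : ℕ)
    {J : ℕ} (p : Fin J → ℝ) (ρ : Fin J → MatPow a n) : ℝ :=
  (1 / ((n : ℝ) * L)) * ∑ k : Fin L,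
    (vnEntropy (cycleChan Φ e k.val n (∑ j, p j • ρ j)) -
      ∑ j, p j * vnEntropy (cycleChan Φ e k.val n (ρ j)))

/-- The mean Holevo quantity `χ̄_C^{(n)}` of a communicating class. -/
def chibarC {I : Type*} [Fintype I] [DecidableEq I] {a b : ℕ} (q : I → I → ℝ)
    (γ : I → ℝ) (Φ : I → QChannelMap a b) (C : Finset I) (n : ℕ) {J : ℕ}
    (p : Fin J → ℝ) (ρ : Fin J → MatPow a n) : ℝ :=
  letI := Classical.propDecidable (∃ L e, IsPeriodicCycle q C L e)
  if h : ∃ L e, IsPeriodicCycle q C L e then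
    holevoCyc Φ h.choose_spec.choose h.choose n p ρ
  else holevoAper q γ Φ C n p ρ

/-- `χ̄_n`: the supremum over ensembles of the minimum over communicating classes
(of positive weight) of the mean Holevo quantities. -/
def chibar {I : Type*} [Fintype I] [DecidableEq I] {a b : ℕ} (q : I → I → ℝ)
    (γ : I → ℝ) (Φ : I → QChannelMap a b) (n : ℕ) : ℝ :=
  sSup {x : ℝ | ∃ (J : ℕ) (p : Fin J → ℝ) (ρ : Fin J → MatPow a n),
    IsEnsemble p ρ ∧
    x = sInf {y : ℝ | ∃ C : Finset I, IsCommClass q C ∧ 0 < gammaC γ C ∧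
      y = chibarC q γ Φ C n p ρ}}

/-- The `n`-use Holevo quantity of the memory channel. -/
def chiN {I : Type*} [Fintype I] {a b : ℕ} (q : I → I → ℝ) (γ : I → ℝ)
    (Φ : I → QChannelMap a b) (n : ℕ) : ℝ :=
  sSup {x : ℝ | ∃ (J : ℕ) (p : Fin J → ℝ) (ρ : Fin J → MatPow a n),
    IsEnsemble p ρ ∧
    x = (1 / (n : ℝ)) * (vnEntropy (∑ j, p j • memChan q γ Φ n (ρ j)) -
      ∑ j, p j * vnEntropy (memChan q γ Φ n (ρ j)))}

/-- A code: densities as codewords and a sub-POVM as decoder. -/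
def IsCode {a b : ℕ} (n N : ℕ) (ρ : Fin N → MatPow a n) (E : Fin N → MatPow b n) : Prop :=
  (∀ k, IsDensity (ρ k)) ∧ (∀ k, (E k).PosSemidef) ∧ Loewner (∑ k, E k) 1

/-- Average probability of error of a code for the memory channel. -/
def avgErr {I : Type*} [Fintype I] {a b : ℕ} (q : I → I → ℝ) (γ : I → ℝ)
    (Φ : I → QChannelMap a b) (n N : ℕ) (ρ : Fin N → MatPow a n)
    (E : Fin N → MatPow b n) : ℝ :=
  (1 / (N : ℝ)) * ∑ k, (1 - ((memChan q γ Φ n (ρ k) * E k).trace).re)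

/-- `R` is an achievable rate for the memory channel. -/
def AchievableRate {I : Type*} [Fintype I] {a b : ℕ} (q : I → I → ℝ) (γ : I → ℝ)
    (Φ : I → QChannelMap a b) (R : ℝ) : Prop :=
  0 ≤ R ∧ ∃ (N : ℕ → ℕ) (ρ : ∀ n, Fin (N n) → MatPow a n)
    (E : ∀ n, Fin (N n) → MatPow b n),
    (∀ n, IsCode n (N n) (ρ n) (E n)) ∧
    (∀ n : ℕ, (2 : ℝ) ^ ((n : ℝ) * R) ≤ (N n : ℝ)) ∧
    Tendsto (fun n => avgErr q γ Φ n (N n) (ρ n) (E n)) atTop (nhds 0)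

/-- The classical capacity: the supremum of achievable rates. -/
def capacity {I : Type*} [Fintype I] {a b : ℕ} (q : I → I → ℝ) (γ : I → ℝ)
    (Φ : I → QChannelMap a b) : ℝ :=
  sSup {R : ℝ | AchievableRate q γ Φ R}

/-- A stochastic matrix. -/
def IsStochastic {I : Type*} [Fintype I] (q : I → I → ℝ) : Prop :=
  (∀ i j, 0 ≤ q i j) ∧ ∀ i, ∑ j, q i j = 1

/-- An invariant probability distribution. -/
def IsInvariantDist {I : Type*} [Fintype I] (q : I → I → ℝ) (γ : I → ℝ) : Prop :=
  (∀ i, 0 ≤ γ i) ∧ ∑ i, γ i = 1 ∧ ∀ j, γ j = ∑ i, γ i * q i j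

/-- The chain is irreducible. -/
def IsIrreducibleChain {I : Type*} [Fintype I] [DecidableEq I] (q : I → I → ℝ) : Prop :=
  ∀ i j, Accessible q i j

/-- The chain is aperiodic. -/
def IsAperiodicChain {I : Type*} [Fintype I] [DecidableEq I] (q : I → I → ℝ) : Prop :=
  ∀ i : I, ∀ d : ℕ, (∀ n : ℕ, 0 < n → 0 < (qMatrix q ^ n) i i → d ∣ n) → d = 1

/-- The index of the `s`-th site of the `r`-th block. -/
def blockIdx {m l : ℕ} (r : Fin m) (s : Fin l) : Fin (m * l) :=
  ⟨r.val * l + s.val, by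
    have h1 := r.isLt
    have h2 := s.isLt
    calc r.val * l + s.val < r.val * l + l := Nat.add_lt_add_left h2 _
      _ = (r.val + 1) * l := by ring
      _ ≤ m * l := Nat.mul_le_mul_right _ h1⟩

/-- The tensor product `ρ 0 ⊗ ρ 1 ⊗ ⋯ ⊗ ρ (m-1)` of `m` states on `l` sites each. -/
def kronFam {d l : ℕ} {m : ℕ} (ρ : Fin m → MatPow d l) : MatPow d (m * l) :=
  Matrix.of fun x x' =>
    ∏ r : Fin m, ρ r (fun s => x (blockIdx r s)) (fun s => x' (blockIdx r s))

/-- The `m`-fold tensor power `ρ^{⊗ m}` of a state on `l` sites. -/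
def kronPow {d l : ℕ} (m : ℕ) (ρ : MatPow d l) : MatPow d (m * l) := kronFam fun _ => ρ

/-- The tensor product `τ 0 ⊗ ⋯ ⊗ τ (n-1)` of single-site states. -/
def kronSites {d n : ℕ} (τ : Fin n → Matrix (Fin d) (Fin d) ℂ) : MatPow d n :=
  Matrix.of fun x x' => ∏ r, τ r (x r) (x' r)

/-- The tensor product of a state on `a` sites and a state on `b` sites. -/
def kron2 {d a b : ℕ} (A : MatPow d a) (B : MatPow d b) : MatPow d (a + b) :=
  Matrix.of fun x x' =>
    A (fun s => x (Fin.castAdd b s)) (fun s => x' (Fin.castAdd b s)) *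
      B (fun t => x (Fin.natAdd a t)) (fun t => x' (Fin.natAdd a t))

/-- `A ⊗ 1 ⊗ B` on `(2m+k)·l` sites, where `A`, `B` act on the first and last `m·l`
sites respectively and the identity acts on the middle `k·l` sites. -/
def threeBlock {d : ℕ} (m k l : ℕ) (A B : MatPow d (m * l)) : MatPow d ((2 * m + k) * l) :=
  Matrix.of fun y y' =>
    A (fun s => y ⟨s.val, by
          have hs := s.isLt
          have h : m * l ≤ (2 * m + k) * l := Nat.mul_le_mul_right _ (by omega)
          omega⟩)
      (fun s => y' ⟨s.val, by
          have hs := s.isLt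
          have h : m * l ≤ (2 * m + k) * l := Nat.mul_le_mul_right _ (by omega)
          omega⟩) *
    (if (fun t : Fin (k * l) => y ⟨m * l + t.val, by
            have ht := t.isLt
            have h : (m + k) * l ≤ (2 * m + k) * l := Nat.mul_le_mul_right _ (by omega)
            have e : (m + k) * l = m * l + k * l := Nat.add_mul _ _ _
            omega⟩) =
        (fun t : Fin (k * l) => y' ⟨m * l + t.val, by
            have ht := t.isLt
            have h : (m + k) * l ≤ (2 * m + k) * l := Nat.mul_le_mul_right _ (by omega)
            have e : (m + k) * l = m * l + k * l := Nat.add_mul _ _ _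
            omega⟩)
      then (1 : ℂ) else 0) *
    B (fun s => y ⟨(m + k) * l + s.val, by
          have hs := s.isLt
          have e : (2 * m + k) * l = (m + k) * l + m * l := by
            rw [show 2 * m + k = (m + k) + m by omega, Nat.add_mul]
          omega⟩)
      (fun s => y' ⟨(m + k) * l + s.val, by
          have hs := s.isLt
          have e : (2 * m + k) * l = (m + k) * l + m * l := by
            rw [show 2 * m + k = (m + k) + m by omega, Nat.add_mul]
          omega⟩)


lemma nsmul_mem_addset {S : Set ℕ} (h0 : 0 ∈ S) (hadd : ∀ a ∈ S, ∀ b ∈ S, a + b ∈ S) :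
    ∀ (j : ℕ), ∀ s ∈ S, j * s ∈ S := by
  intro j
  induction j with
  | zero => intro s _; simpa using h0
  | succ n ih => intro s hs; have := hadd _ (ih s hs) _ hs; simpa [Nat.succ_mul] using this

lemma addclosed_cofinite (S : Set ℕ) (h0 : 0 ∈ S)
    (hadd : ∀ a ∈ S, ∀ b ∈ S, a + b ∈ S)
    (hgcd : ∀ d : ℕ, (∀ n ∈ S, 0 < n → d ∣ n) → d = 1) :
    ∃ N, ∀ n ≥ N, n ∈ S := by
  -- the subgroup of ℤ of differences of elements of S
  set P : AddSubgroup ℤ :=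
    { carrier := {z : ℤ | ∃ a ∈ S, ∃ b ∈ S, z = (a : ℤ) - b}
      zero_mem' := ⟨0, h0, 0, h0, by simp⟩
      add_mem' := by
        rintro x y ⟨a, ha, b, hb, rfl⟩ ⟨c, hc, d, hd, rfl⟩
        exact ⟨a + c, hadd _ ha _ hc, b + d, hadd _ hb _ hd, by push_cast; ring⟩
      neg_mem' := by
        rintro x ⟨a, ha, b, hb, rfl⟩
        exact ⟨b, hb, a, ha, by ring⟩ } with hP
  obtain ⟨g, hg⟩ := Int.subgroup_cyclic P
  have hmemS : ∀ n ∈ S, (n : ℤ) ∈ P := fun n hn => ⟨n, hn, 0, h0, by simp⟩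
  have hdvd : ∀ n ∈ S, 0 < n → g.natAbs ∣ n := by
    intro n hn _
    have := hmemS n hn
    rw [hg, AddSubgroup.mem_closure_singleton] at this
    obtain ⟨t, ht⟩ := this
    have : g ∣ (n : ℤ) := ⟨t, by rw [← ht, smul_eq_mul, mul_comm]⟩
    simpa using Int.natAbs_dvd_natAbs.mpr this
  have hg1 : g.natAbs = 1 := hgcd _ hdvd
  have h1P : (1 : ℤ) ∈ P := by
    rw [hg, AddSubgroup.mem_closure_singleton]
    rcases Int.natAbs_eq g with h | h
    · exact ⟨1, by rw [h, hg1]; simp⟩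
    · exact ⟨-1, by rw [h, hg1]; simp⟩
  obtain ⟨a, ha, b, hb, hab⟩ := h1P
  have hab' : a = b + 1 := by omega
  subst hab'
  -- b and b+1 are both in S
  rcases Nat.eq_zero_or_pos b with rfl | hbpos
  · refine ⟨1, fun n _ => ?_⟩
    have := nsmul_mem_addset h0 hadd n 1 (by simpa using ha)
    simpa using this
  · refine ⟨b * b, fun n hn => ?_⟩
    set r := n % b with hr
    set t := n / b with ht
    have hrb : r < b := Nat.mod_lt _ hbpos
    have hnt : n = t * b + r := by rw [ht, hr, Nat.mul_comm]; exact (Nat.div_add_mod n b).symm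
    have htr : r ≤ t := by
      have : b ≤ t := Nat.le_div_iff_mul_le hbpos |>.mpr (by nlinarith)
      omega
    obtain ⟨d, hd⟩ := Nat.le.dest htr
    have key : n = d * b + r * (b + 1) := by rw [hnt, ← hd]; ring
    rw [key]
    exact hadd _ (nsmul_mem_addset h0 hadd d b hb) _ (nsmul_mem_addset h0 hadd r (b+1) ha)


section markov
variable {I : Type*} [Fintype I] [DecidableEq I] {q : I → I → ℝ} {γ : I → ℝ}

lemma qpow_nonneg (hq : IsStochastic q) : ∀ n (i j : I), 0 ≤ (qMatrix q ^ n) i j := by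
  intro n
  induction n with
  | zero => intro i j; simp [Matrix.one_apply]; split <;> norm_num
  | succ n ih =>
    intro i j
    rw [pow_succ, Matrix.mul_apply]
    exact Finset.sum_nonneg fun t _ => mul_nonneg (ih i t) (hq.1 t j)

lemma qpow_rowsum (hq : IsStochastic q) : ∀ n (i : I), ∑ j, (qMatrix q ^ n) i j = 1 := by
  intro n
  induction n with
  | zero => intro i; simp [Matrix.one_apply]
  | succ n ih =>
    intro i
    simp only [pow_succ, Matrix.mul_apply]
    rw [Finset.sum_comm]
    have : ∀ t ∈ Finset.univ, ∑ j : I, (qMatrix q ^ n) i t * qMatrix q t j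
        = (qMatrix q ^ n) i t := by
      intro t _
      rw [← Finset.mul_sum]
      have : ∑ j, qMatrix q t j = 1 := hq.2 t
      rw [this, mul_one]
    rw [Finset.sum_congr rfl this, ih]

lemma qpow_mul_le (hq : IsStochastic q) (a b : ℕ) (i k j : I) :
    (qMatrix q ^ a) i k * (qMatrix q ^ b) k j ≤ (qMatrix q ^ (a + b)) i j := by
  rw [pow_add, Matrix.mul_apply]
  exact Finset.single_le_sum
    (fun t _ => mul_nonneg (qpow_nonneg hq a i t) (qpow_nonneg hq b t j))
    (Finset.mem_univ k)

lemma exists_pos_pow (hq : IsStochastic q) (hirr : IsIrreducibleChain q)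
    (haper : IsAperiodicChain q) [Nonempty I] :
    ∃ N : ℕ, 0 < N ∧ ∀ i j : I, 0 < (qMatrix q ^ N) i j := by
  -- return time sets are cofinite
  have hS : ∀ i : I, ∃ Ni, ∀ n ≥ Ni, 0 < (qMatrix q ^ n) i i := by
    intro i
    have := addclosed_cofinite {n : ℕ | 0 < (qMatrix q ^ n) i i}
      (by simp [Set.mem_setOf_eq, Matrix.one_apply])
      (by
        intro a ha b hb
        exact lt_of_lt_of_le (mul_pos ha hb) (qpow_mul_le hq a b i i i))
      (fun d hd => haper i d (fun n hn hpos => hd n hpos hn))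
    obtain ⟨N, hN⟩ := this
    exact ⟨N, fun n hn => hN n hn⟩
  choose NN hNN using hS
  choose nf hnf using fun i j => hirr i j
  set Nmax := Finset.univ.sup NN with hNmax
  set nmax := Finset.univ.sup (fun p : I × I => nf p.1 p.2) with hnmax
  refine ⟨Nmax + nmax + 1, Nat.succ_pos _, fun i j => ?_⟩
  have h1 : nf i j ≤ nmax := Finset.le_sup (f := fun p : I × I => nf p.1 p.2)
    (Finset.mem_univ (i, j))
  have h2 : NN i ≤ Nmax := Finset.le_sup (Finset.mem_univ i)
  have hd : Nmax + nmax + 1 = (Nmax + nmax + 1 - nf i j) + nf i j := by omega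
  have hret : 0 < (qMatrix q ^ (Nmax + nmax + 1 - nf i j)) i i :=
    hNN i _ (by omega)
  calc (0:ℝ) < (qMatrix q ^ (Nmax + nmax + 1 - nf i j)) i i * (qMatrix q ^ (nf i j)) i j :=
        mul_pos hret (hnf i j)
    _ ≤ (qMatrix q ^ ((Nmax + nmax + 1 - nf i j) + nf i j)) i j := qpow_mul_le hq _ _ _ _ _
    _ = (qMatrix q ^ (Nmax + nmax + 1)) i j := by rw [← hd]

lemma gamma_qpow (hγ : IsInvariantDist q γ) :
    ∀ n (j : I), ∑ i, γ i * (qMatrix q ^ n) i j = γ j := by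
  intro n
  induction n with
  | zero => intro j; simp [Matrix.one_apply]
  | succ n ih =>
    intro j
    simp only [pow_succ, Matrix.mul_apply, Finset.mul_sum]
    rw [Finset.sum_comm]
    have : ∀ t ∈ Finset.univ, ∑ i : I, γ i * ((qMatrix q ^ n) i t * qMatrix q t j)
        = γ t * qMatrix q t j := by
      intro t _
      have : ∑ i : I, γ i * ((qMatrix q ^ n) i t * qMatrix q t j)
          = (∑ i : I, γ i * (qMatrix q ^ n) i t) * qMatrix q t j := by
        rw [Finset.sum_mul]; congr 1; ext i; ring
      rw [this, ih t]
    rw [Finset.sum_congr rfl this]; exact (hγ.2.2 j).symm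

theorem qpow_tendsto_gamma (hq : IsStochastic q) (hγ : IsInvariantDist q γ)
    (hirr : IsIrreducibleChain q) (haper : IsAperiodicChain q) (a b : I) :
    Tendsto (fun n => (qMatrix q ^ n) a b) atTop (nhds (γ b)) := by
  have hne : Nonempty I := by
    by_contra h
    rw [not_nonempty_iff] at h
    have := hγ.2.1
    simp [Finset.univ_eq_empty] at this
  obtain ⟨N, hNpos, hN⟩ := exists_pos_pow hq hirr haper
  -- minimal entry of q^N
  set c : ℝ := Finset.univ.inf' (Finset.univ_nonempty) (fun p : I × I => (qMatrix q ^ N) p.1 p.2)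
    with hc
  have hcpos : 0 < c := by
    rw [hc]
    apply Finset.lt_inf'_iff _ |>.mpr
    exact fun p _ => hN p.1 p.2
  have hcle : ∀ i j : I, c ≤ (qMatrix q ^ N) i j := fun i j =>
    Finset.inf'_le _ (Finset.mem_univ (i, j))
  set r : ℝ := 1 - c * (Fintype.card I) with hr
  have hcard : (0:ℝ) < Fintype.card I := by
    have := Fintype.card_pos (α := I); positivity
  have hr1 : r < 1 := by
    rw [hr]; nlinarith
  have hr0 : 0 ≤ r := by
    have hx := qpow_rowsum hq N (Classical.arbitrary I)
    have : c * (Fintype.card I) ≤ 1 := by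
      calc c * (Fintype.card I) = ∑ _j : I, c := by
            rw [Finset.sum_const, nsmul_eq_mul, Fintype.card, mul_comm]
        _ ≤ ∑ j, (qMatrix q ^ N) (Classical.arbitrary I) j :=
            Finset.sum_le_sum (fun j _ => hcle _ j)
        _ = 1 := hx
    rw [hr]; linarith
  -- contraction
  have hcontr : ∀ (v : I → ℝ), (∑ i, v i = 0) →
      ∑ j, |∑ i, v i * (qMatrix q ^ N) i j| ≤ r * ∑ i, |v i| := by
    intro v hv
    have key : ∀ j, |∑ i, v i * (qMatrix q ^ N) i j|
        ≤ ∑ i, |v i| * ((qMatrix q ^ N) i j - c) := by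
      intro j
      have : ∑ i, v i * (qMatrix q ^ N) i j = ∑ i, v i * ((qMatrix q ^ N) i j - c) := by
        simp only [mul_sub]
        rw [Finset.sum_sub_distrib, ← Finset.sum_mul, hv, zero_mul, sub_zero]
      rw [this]
      refine (Finset.abs_sum_le_sum_abs _ _).trans ?_
      apply Finset.sum_le_sum
      intro i _
      have hx : |(qMatrix q ^ N) i j - c| = (qMatrix q ^ N) i j - c :=
        abs_of_nonneg (by have := hcle i j; linarith)
      rw [abs_mul, hx]
    calc ∑ j, |∑ i, v i * (qMatrix q ^ N) i j|
        ≤ ∑ j, ∑ i, |v i| * ((qMatrix q ^ N) i j - c) :=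
          Finset.sum_le_sum (fun j _ => key j)
      _ = ∑ i, |v i| * (∑ j, ((qMatrix q ^ N) i j - c)) := by
          rw [Finset.sum_comm]; congr 1; ext i; rw [Finset.mul_sum]
      _ = ∑ i, |v i| * r := by
          congr 1; ext i
          congr 1
          rw [Finset.sum_sub_distrib, qpow_rowsum hq, Finset.sum_const, hr]
          simp [nsmul_eq_mul, mul_comm]
      _ = r * ∑ i, |v i| := by rw [← Finset.sum_mul, mul_comm]
  -- D n := total variation distance
  set D : ℕ → ℝ := fun n => ∑ j, |(qMatrix q ^ n) a j - γ j| with hD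
  have hDrec : ∀ n, D (n + N) ≤ r * D n := by
    intro n
    have hv : ∑ i, ((qMatrix q ^ n) a i - γ i) = 0 := by
      rw [Finset.sum_sub_distrib, qpow_rowsum hq, hγ.2.1, sub_self]
    have := hcontr (fun i => (qMatrix q ^ n) a i - γ i) hv
    have heq : ∀ j, ∑ i, ((qMatrix q ^ n) a i - γ i) * (qMatrix q ^ N) i j
        = (qMatrix q ^ (n + N)) a j - γ j := by
      intro j
      simp only [sub_mul]
      rw [Finset.sum_sub_distrib, gamma_qpow hγ N j, pow_add, Matrix.mul_apply]
    calc D (n + N) = ∑ j, |∑ i, ((qMatrix q ^ n) a i - γ i) * (qMatrix q ^ N) i j| := by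
          rw [hD]; simp only; congr 1; ext j; rw [heq j]
      _ ≤ r * D n := this
  have hD2 : ∀ n, D n ≤ 2 := by
    intro n
    calc D n ≤ ∑ j, ((qMatrix q ^ n) a j + γ j) := by
          apply Finset.sum_le_sum
          intro j _
          have h1 := qpow_nonneg hq n a j
          have h2 := hγ.1 j
          rw [abs_sub_le_iff]; constructor <;> linarith
      _ = 2 := by rw [Finset.sum_add_distrib, qpow_rowsum hq, hγ.2.1]; norm_num
  have hiter : ∀ s t, D (s + t * N) ≤ r ^ t * D s := by
    intro s t
    induction t with
    | zero => simp
    | succ t ih =>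
      have h1 : s + (t + 1) * N = (s + t * N) + N := by ring
      rw [h1]
      calc D ((s + t * N) + N) ≤ r * D (s + t * N) := hDrec _
        _ ≤ r * (r ^ t * D s) := by
            apply mul_le_mul_of_nonneg_left ih hr0
        _ = r ^ (t + 1) * D s := by ring
  have hbound : ∀ n, |(qMatrix q ^ n) a b - γ b| ≤ 2 * r ^ (n / N) := by
    intro n
    have h1 : |(qMatrix q ^ n) a b - γ b| ≤ D n := by
      rw [hD]
      exact Finset.single_le_sum (f := fun j => |(qMatrix q ^ n) a j - γ j|)
        (fun j _ => abs_nonneg _) (Finset.mem_univ b)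
    have h2 : n = n % N + (n / N) * N := (Nat.mod_add_div' n N).symm
    have h3 : D n ≤ r ^ (n / N) * D (n % N) := by
      conv_lhs => rw [h2]
      exact hiter _ _
    have h4 : r ^ (n / N) * D (n % N) ≤ r ^ (n / N) * 2 :=
      mul_le_mul_of_nonneg_left (hD2 _) (pow_nonneg hr0 _)
    calc |(qMatrix q ^ n) a b - γ b| ≤ D n := h1
      _ ≤ r ^ (n / N) * D (n % N) := h3
      _ ≤ r ^ (n / N) * 2 := h4
      _ = 2 * r ^ (n / N) := by ring
  have hgeo : Tendsto (fun n : ℕ => 2 * r ^ (n / N)) atTop (nhds 0) := by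
    have h1 : Tendsto (fun t : ℕ => r ^ t) atTop (nhds 0) :=
      tendsto_pow_atTop_nhds_zero_of_lt_one hr0 hr1
    have h2 : Tendsto (fun n : ℕ => n / N) atTop atTop :=
      le_of_eq (map_div_atTop_eq_nat N hNpos)
    have := (h1.comp h2).const_mul (2:ℝ)
    simpa using this
  have hzero : Tendsto (fun n => (qMatrix q ^ n) a b - γ b) atTop (nhds 0) := by
    apply squeeze_zero_norm (fun n => by simpa [Real.norm_eq_abs] using hbound n) hgeo
  have := hzero.add (tendsto_const_nhds (x := γ b))
  simpa using this

end markov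
-- PREFIX
section gsplit
variable {α : Type*}

def ge1 (p q r n : ℕ) (hn : p + q + r = n) : Fin p → Fin n := fun s => ⟨s.val, by omega⟩
def ge2 (p q r n : ℕ) (hn : p + q + r = n) : Fin q → Fin n := fun t => ⟨p + t.val, by omega⟩
def ge3 (p q r n : ℕ) (hn : p + q + r = n) : Fin r → Fin n :=
  fun s => ⟨p + q + s.val, by omega⟩

def gcombine {p q r n : ℕ} (hn : p + q + r = n) (u : Fin p → α) (v : Fin q → α)
    (w : Fin r → α) : Fin n → α := fun j =>
  if h : j.val < p then u ⟨j.val, h⟩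
  else if h2 : j.val < p + q then v ⟨j.val - p, by omega⟩
  else w ⟨j.val - (p + q), by have := j.isLt; omega⟩

variable {p q r n : ℕ} (hn : p + q + r = n)

lemma gc_lt {u v w} (j : Fin n) (h : j.val < p) :
    gcombine (α := α) hn u v w j = u ⟨j.val, h⟩ := by simp [gcombine, h]

lemma gc_mid {u v w} (j : Fin n) (h1 : p ≤ j.val) (h2 : j.val < p + q) :
    gcombine (α := α) hn u v w j = v ⟨j.val - p, by omega⟩ := by
  simp [gcombine, Nat.not_lt.mpr h1, h2]

lemma gc_hi {u v w} (j : Fin n) (h1 : p + q ≤ j.val) :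
    gcombine (α := α) hn u v w j = w ⟨j.val - (p + q), by have := j.isLt; omega⟩ := by
  simp only [gcombine, dif_neg (Nat.not_lt.mpr (by omega : p ≤ j.val)),
    dif_neg (Nat.not_lt.mpr h1)]

lemma gc_ge1 {u : Fin p → α} {v w} (s : Fin p) :
    gcombine hn u v w (ge1 p q r n hn s) = u s := by
  rw [gc_lt hn _ s.isLt]
  exact congrArg u (Fin.ext rfl)

lemma gc_ge2 {u : Fin p → α} {v : Fin q → α} {w} (t : Fin q) :
    gcombine hn u v w (ge2 p q r n hn t) = v t := by
  rw [gc_mid hn _ (by simp [ge2]) (by simpa [ge2] using t.isLt)]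
  congr 1
  exact Fin.ext (by simp [ge2])

lemma gc_ge3 {u : Fin p → α} {v : Fin q → α} {w : Fin r → α} (s : Fin r) :
    gcombine hn u v w (ge3 p q r n hn s) = w s := by
  rw [gc_hi hn _ (by simp [ge3])]
  congr 1
  exact Fin.ext (by simp [ge3])

/-- the sum-type enumeration of `Fin n` by the three pieces -/
def gsum : (Fin p ⊕ (Fin q ⊕ Fin r)) ≃ Fin n where
  toFun := Sum.elim (ge1 p q r n hn) (Sum.elim (ge2 p q r n hn) (ge3 p q r n hn))
  invFun := fun j =>
    if h : j.val < p then Sum.inl ⟨j.val, h⟩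
    else if h2 : j.val < p + q then Sum.inr (Sum.inl ⟨j.val - p, by omega⟩)
    else Sum.inr (Sum.inr ⟨j.val - (p + q), by have := j.isLt; omega⟩)
  left_inv := by
    rintro (s | t | s)
    · simp [ge1]
    · have h1 : ¬ (p + t.val < p) := by omega
      have h2 : p + t.val < p + q := by have := t.isLt; omega
      simp [ge1, ge2, h1, h2]
    · have h1 : ¬ (p + q + s.val < p) := by omega
      have h2 : ¬ (p + q + s.val < p + q) := by omega
      simp [ge1, ge2, ge3, h1, h2]
  right_inv := by
    intro j
    by_cases h : j.val < p
    · simp [h, ge1]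
    · by_cases h2 : j.val < p + q
      · simp [h, h2, ge2]; exact Fin.ext (by simp; omega)
      · simp [h, h2, ge3]; exact Fin.ext (by simp; have := j.isLt; omega)

lemma gprod_split {β : Type*} [CommMonoid β] (G : Fin n → β) :
    ∏ j, G j = (∏ s : Fin p, G (ge1 p q r n hn s)) *
      ((∏ t : Fin q, G (ge2 p q r n hn t)) * (∏ s : Fin r, G (ge3 p q r n hn s))) := by
  rw [← Equiv.prod_comp (gsum hn) G, Fintype.prod_sum_type, Fintype.prod_sum_type]
  rfl

/-- functions out of `Fin n` as triples -/
def gfunEquiv : ((Fin p → α) × (Fin q → α) × (Fin r → α)) ≃ (Fin n → α) where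
  toFun := fun z => gcombine hn z.1 z.2.1 z.2.2
  invFun := fun f => (f ∘ ge1 p q r n hn, f ∘ ge2 p q r n hn, f ∘ ge3 p q r n hn)
  left_inv := by
    rintro ⟨u, v, w⟩
    refine Prod.ext (funext fun s => ?_) (Prod.ext (funext fun t => ?_) (funext fun s => ?_))
    · exact gc_ge1 hn s
    · exact gc_ge2 hn t
    · exact gc_ge3 hn s
  right_inv := by
    intro f
    funext j
    show gcombine hn (f ∘ ge1 p q r n hn) (f ∘ ge2 p q r n hn) (f ∘ ge3 p q r n hn) j = f j
    by_cases h : j.val < p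
    · rw [gc_lt hn _ h]
      exact congrArg f (Fin.ext rfl)
    · by_cases h2 : j.val < p + q
      · rw [gc_mid hn _ (by omega) h2]
        exact congrArg f (Fin.ext (by simp [ge2]; omega))
      · rw [gc_hi hn _ (by omega)]
        exact congrArg f (Fin.ext (by simp [ge3]; omega))

lemma gsum_split [Fintype α] [DecidableEq α] {β : Type*} [AddCommMonoid β]
    (F : (Fin n → α) → β) :
    ∑ f : Fin n → α, F f
      = ∑ u : Fin p → α, ∑ v : Fin q → α, ∑ w : Fin r → α, F (gcombine hn u v w) := by
  rw [← Equiv.sum_comp (gfunEquiv (α := α) hn), Fintype.sum_prod_type]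
  congr 1; funext u
  rw [Fintype.sum_prod_type]
  rfl

end gsplit
section paths
variable {I : Type*} [Fintype I] [DecidableEq I] (Q : I → I → ℝ) (γ : I → ℝ)

def pathWt {r : ℕ} (a : I) (w : Fin r → I) : ℝ :=
  ∏ t : Fin r, Q (if h : t.val = 0 then a
    else w ⟨t.val - 1, Nat.lt_of_le_of_lt (Nat.pred_le _) t.isLt⟩) (w t)

def stepWt {r : ℕ} (w : Fin r → I) : ℝ :=
  ∏ t : Fin r, if h : t.val = 0 then 1
    else Q (w ⟨t.val - 1, Nat.lt_of_le_of_lt (Nat.pred_le _) t.isLt⟩) (w t)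

lemma prod_if_zero {r : ℕ} (hr : 0 < r) (c : ℝ) :
    (∏ t : Fin r, if t.val = 0 then c else 1) = c := by
  rw [Finset.prod_eq_single_of_mem (⟨0, hr⟩ : Fin r) (Finset.mem_univ _)]
  · simp
  · intro t _ ht
    rw [if_neg (fun h => ht (Fin.ext h))]

lemma pathWt_eq {r : ℕ} (hr : 0 < r) (a : I) (w : Fin r → I) :
    pathWt Q a w = Q a (w ⟨0, hr⟩) * stepWt Q w := by
  rw [pathWt, stepWt, ← prod_if_zero hr (Q a (w ⟨0, hr⟩)), ← Finset.prod_mul_distrib]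
  apply Finset.prod_congr rfl
  intro t _
  by_cases ht : t.val = 0
  · rw [dif_pos ht, if_pos ht, dif_pos ht, mul_one]
    congr 1
    exact congrArg w (Fin.ext ht)
  · rw [dif_neg ht, if_neg ht, dif_neg ht, one_mul]

lemma chainWt_eq {r : ℕ} (hr : 0 < r) (w : Fin r → I) :
    chainWt Q γ w = γ (w ⟨0, hr⟩) * stepWt Q w := by
  rw [chainWt, stepWt, ← prod_if_zero hr (γ (w ⟨0, hr⟩)), ← Finset.prod_mul_distrib]
  apply Finset.prod_congr rfl
  intro t _
  by_cases ht : t.val = 0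
  · rw [if_pos ht, if_pos ht, dif_pos ht, mul_one]
    exact congrArg γ (congrArg w (Fin.ext ht))
  · rw [if_neg ht, if_neg ht, dif_neg ht, one_mul]

lemma cons_val {β : Type*} {K : ℕ} (x : β) (v : Fin K → β) (j : Fin (K+1)) :
    Fin.cons (α := fun _ => β) x v j = if h : j.val = 0 then x else v ⟨j.val - 1, by omega⟩ := by
  rcases j with ⟨jv, hj⟩
  cases jv with
  | zero => simp
  | succ s =>
    have he : (⟨s+1, hj⟩ : Fin (K+1)) = Fin.succ ⟨s, by omega⟩ := rfl
    rw [he, Fin.cons_succ]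
    simp

lemma pathWt_cons {K : ℕ} (a x : I) (v : Fin K → I) :
    pathWt Q a (Fin.cons x v) = Q a x * pathWt Q x v := by
  rw [pathWt, pathWt, Fin.prod_univ_succ]
  refine congrArg₂ (· * ·) ?_ ?_
  · simp [_root_.cons_val]
  · apply Finset.prod_congr rfl
    intro t _
    simp only [_root_.cons_val, Fin.val_succ, Fin.val_mk]
    split_ifs <;>
      first
        | omega
        | contradiction
        | (congr 1 <;> first | rfl | exact congrArg _ (Fin.ext (by simp -failIfUnchanged <;> omega)))

lemma pathWt_sum : ∀ (K : ℕ) (a b : I),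
    ∑ v : Fin (K + 1) → I, pathWt Q a v * Q (v ⟨K, Nat.lt_succ_self K⟩) b
      = (qMatrix Q ^ (K + 2)) a b := by
  intro K
  induction K with
  | zero =>
    intro a b
    rw [← Equiv.sum_comp (Equiv.funUnique (Fin 1) I).symm]
    rw [pow_two, Matrix.mul_apply]
    apply Finset.sum_congr rfl
    intro x _
    simp [pathWt, Equiv.funUnique, qMatrix]
  | succ K ih =>
    intro a b
    rw [← Equiv.sum_comp (Fin.consEquiv (fun _ => I)), Fintype.sum_prod_type]
    have step : ∀ (x : I) (v : Fin (K+1) → I),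
        pathWt Q a (Fin.cons x v) * Q (Fin.cons (α := fun _ => I) x v ⟨K+1, Nat.lt_succ_self _⟩) b
          = Q a x * (pathWt Q x v * Q (v ⟨K, Nat.lt_succ_self K⟩) b) := by
      intro x v
      have hlast : Fin.cons (α := fun _ => I) x v ⟨K+1, Nat.lt_succ_self _⟩
          = v ⟨K, Nat.lt_succ_self K⟩ := by
        rw [_root_.cons_val]
        simp
      rw [pathWt_cons, hlast]; ring
    calc ∑ x : I, ∑ v : Fin (K+1) → I,
          pathWt Q a ((Fin.consEquiv (fun _ => I)) (x, v))
            * Q (((Fin.consEquiv (fun _ => I)) (x, v)) ⟨K+1, Nat.lt_succ_self _⟩) b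
        = ∑ x : I, Q a x * ((qMatrix Q ^ (K + 2)) x b) := by
          apply Finset.sum_congr rfl
          intro x _
          rw [← ih x b, Finset.mul_sum]
          apply Finset.sum_congr rfl
          intro v _
          exact step x v
      _ = (qMatrix Q ^ (K + 3)) a b := by
          conv_rhs => rw [show qMatrix Q ^ (K + 3) = qMatrix Q * qMatrix Q ^ (K + 2) from
            pow_succ' _ _]
          rw [Matrix.mul_apply]
          apply Finset.sum_congr rfl
          intro x _
          simp [qMatrix]

lemma chainWt_gcombine {p q r n : ℕ} (hn : p + q + r = n) (hp : 0 < p) (hq : 0 < q)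
    (hr : 0 < r) (u : Fin p → I) (v : Fin q → I) (w : Fin r → I) :
    chainWt Q γ (gcombine hn u v w)
      = chainWt Q γ u * pathWt Q (u ⟨p - 1, by omega⟩) v
          * pathWt Q (v ⟨q - 1, by omega⟩) w := by
  rw [chainWt, gprod_split hn, ← mul_assoc]
  congr 1
  congr 1
  · rw [chainWt]
    apply Finset.prod_congr rfl
    intro s _
    dsimp only [ge1]
    simp only [gcombine, ge1, Fin.val_mk]
    split_ifs <;>
      first
        | omega
        | contradiction
        | (congr 1 <;> first | rfl | exact congrArg _ (Fin.ext (by simp -failIfUnchanged <;> omega)))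
  · rw [pathWt]
    apply Finset.prod_congr rfl
    intro t _
    dsimp only [ge2]
    simp only [gcombine, ge2, Fin.val_mk]
    split_ifs <;>
      first
        | omega
        | contradiction
        | (congr 1 <;> first | rfl | exact congrArg _ (Fin.ext (by simp -failIfUnchanged <;> omega)))
  · rw [pathWt]
    apply Finset.prod_congr rfl
    intro s _
    dsimp only [ge3]
    simp only [gcombine, ge3, Fin.val_mk]
    split_ifs <;>
      first
        | omega
        | contradiction
        | (congr 1 <;> first | rfl | exact congrArg _ (Fin.ext (by simp -failIfUnchanged <;> omega)))

end paths
section qtrace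
variable {dH dK : ℕ}

lemma trace_mul_form {ι : Type*} [Fintype ι] [DecidableEq ι]
    (M X : Matrix ι ι ℂ) :
    (M * X).trace = ∑ y : ι, ∑ y' : ι, M y y' * X y' y := by
  simp [Matrix.trace, Matrix.diag, Matrix.mul_apply]

lemma trace_stdBasis {ι : Type*} [Fintype ι] [DecidableEq ι] (a b : ι) :
    (Matrix.single a b (1 : ℂ)).trace = if a = b then 1 else 0 := by
  by_cases h : a = b
  · subst h; simp [Matrix.trace_single_eq_same]
  · rw [Matrix.trace_single_eq_of_ne (h := h)]
    simp [h]

lemma prod_delta {n d : ℕ} (x x' : Fin n → Fin d) :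
    (∏ t : Fin n, if x t = x' t then (1:ℂ) else 0) = if x = x' then 1 else 0 := by
  by_cases h : x = x'
  · subst h; simp
  · rw [if_neg h]
    obtain ⟨t, ht⟩ := Function.ne_iff.mp h
    exact Finset.prod_eq_zero (Finset.mem_univ t) (by rw [if_neg ht])

lemma sum_prod_fun {n : ℕ} {β : Type*} [Fintype β] [DecidableEq β] (f : Fin n → β → ℂ) :
    ∑ y : Fin n → β, ∏ t, f t (y t) = ∏ t, ∑ z, f t z := by
  rw [Finset.prod_univ_sum, Fintype.piFinset_univ]

lemma trace_tensChan_mul {n : ℕ} (Φs : Fin n → QChannelMap dH dK)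
    (ρ : MatPow dH n) (X : MatPow dK n) :
    (tensChan n Φs ρ * X).trace
      = ∑ y : Fin n → Fin dK, ∑ y' : Fin n → Fin dK, ∑ x : Fin n → Fin dH,
          ∑ x' : Fin n → Fin dH, ρ x x' * X y' y
            * ∏ t, Φs t (Matrix.single (x t) (x' t) 1) (y t) (y' t) := by
  rw [trace_mul_form]
  apply Finset.sum_congr rfl
  intro y _
  apply Finset.sum_congr rfl
  intro y' _
  show (tensChan n Φs ρ) y y' * X y' y = _
  rw [show (tensChan n Φs ρ) y y' = ∑ x : Fin n → Fin dH, ∑ x' : Fin n → Fin dH,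
      ρ x x' * ∏ t, Φs t (Matrix.single (x t) (x' t) 1) (y t) (y' t) from rfl]
  rw [Finset.sum_mul]
  apply Finset.sum_congr rfl
  intro x _
  rw [Finset.sum_mul]
  apply Finset.sum_congr rfl
  intro x' _
  ring

lemma trace_memChan_mul {I : Type*} [Fintype I] [DecidableEq I] (q : I → I → ℝ)
    (γ : I → ℝ) (Φ : I → QChannelMap dH dK) (n : ℕ) (ρ : MatPow dH n) (X : MatPow dK n) :
    (memChan q γ Φ n ρ * X).trace
      = ∑ i : Fin n → I, (chainWt q γ i : ℂ)
          * (tensChan n (fun t => Φ (i t)) ρ * X).trace := by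
  rw [memChan, Finset.sum_mul, Matrix.trace_sum]
  apply Finset.sum_congr rfl
  intro i _
  rw [Matrix.smul_mul, Matrix.trace_smul]
  rw [Complex.real_smul]

lemma trace_tensChan {n : ℕ} (Φs : Fin n → QChannelMap dH dK)
    (hTP : ∀ t, ∀ ρ' : Matrix (Fin dH) (Fin dH) ℂ, (Φs t ρ').trace = ρ'.trace)
    (ρ : MatPow dH n) : (tensChan n Φs ρ).trace = ρ.trace := by
  have h1 : (tensChan n Φs ρ).trace
      = ∑ y : Fin n → Fin dK, ∑ x : Fin n → Fin dH, ∑ x' : Fin n → Fin dH,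
          ρ x x' * ∏ t, Φs t (Matrix.single (x t) (x' t) 1) (y t) (y t) := by
    simp [Matrix.trace, Matrix.diag, tensChan]
  rw [h1, Finset.sum_comm]
  have h2 : ∀ x : Fin n → Fin dH, ∑ y : Fin n → Fin dK, ∑ x' : Fin n → Fin dH,
      ρ x x' * ∏ t, Φs t (Matrix.single (x t) (x' t) 1) (y t) (y t)
        = ρ x x := by
    intro x
    rw [Finset.sum_comm]
    have h3 : ∀ x' : Fin n → Fin dH,
        ∑ y : Fin n → Fin dK, ρ x x'
            * ∏ t, Φs t (Matrix.single (x t) (x' t) 1) (y t) (y t)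
          = ρ x x' * (if x = x' then 1 else 0) := by
      intro x'
      rw [← Finset.mul_sum]
      congr 1
      rw [sum_prod_fun (fun t z => Φs t (Matrix.single (x t) (x' t) 1) z z)]
      rw [← prod_delta x x']
      apply Finset.prod_congr rfl
      intro t _
      have : ∑ z, Φs t (Matrix.single (x t) (x' t) 1) z z
          = (Φs t (Matrix.single (x t) (x' t) 1)).trace := rfl
      rw [this, hTP t, trace_stdBasis]
    rw [Finset.sum_congr rfl (fun x' _ => h3 x')]
    simp
  rw [Finset.sum_congr rfl (fun x _ => h2 x)]
  rfl

def blockFunEquiv {d l m : ℕ} (hl : 0 < l) : (Fin (m * l) → Fin d) ≃ (Fin m → (Fin l → Fin d)) where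
  toFun := fun x r s => x (blockIdx r s)
  invFun := fun g j => g ⟨j.val / l, (Nat.div_lt_iff_lt_mul hl).mpr j.isLt⟩
    ⟨j.val % l, Nat.mod_lt _ hl⟩
  left_inv := by
    intro x
    funext j
    exact congrArg x (Fin.ext (show j.val / l * l + j.val % l = j.val from
      Nat.div_add_mod' _ _))
  right_inv := by
    intro g
    funext r s
    have h1 : (blockIdx r s).val / l = r.val := by
      show (r.val * l + s.val) / l = r.val
      rw [Nat.mul_comm, Nat.mul_add_div hl, Nat.div_eq_of_lt s.isLt, Nat.add_zero]
    have h2 : (blockIdx r s).val % l = s.val := by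
      show (r.val * l + s.val) % l = s.val
      rw [Nat.mul_comm, Nat.mul_add_mod, Nat.mod_eq_of_lt s.isLt]
    congr 1 <;> exact Fin.ext (by simp [h1, h2])

lemma trace_kronPow {d l : ℕ} (hl : 0 < l) (m : ℕ) (ρ : MatPow d l) :
    (kronPow m ρ).trace = ρ.trace ^ m := by
  calc (kronPow m ρ).trace
      = ∑ x : Fin (m*l) → Fin d, ∏ r : Fin m,
          ρ (fun s => x (blockIdx r s)) (fun s => x (blockIdx r s)) := by
        simp [Matrix.trace, Matrix.diag, kronPow, kronFam]
    _ = ∑ g : Fin m → (Fin l → Fin d), ∏ r, ρ (g r) (g r) := by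
        rw [← Equiv.sum_comp (blockFunEquiv (d := d) (m := m) hl)
          (fun g => ∏ r, ρ (g r) (g r))]
        rfl
    _ = ∏ _r : Fin m, ∑ h : Fin l → Fin d, ρ h h :=
        sum_prod_fun (fun _ h => ρ h h)
    _ = ρ.trace ^ m := by
      rw [Finset.prod_const]
      simp [Matrix.trace, Matrix.diag]

end qtrace
section split
variable {dH dK : ℕ}

/-- the quadruple-of-variables type for the master trace formula -/
abbrev Wvar (dH dK n : ℕ) := (Fin n → Fin dK) × (Fin n → Fin dK) ×
  (Fin n → Fin dH) × (Fin n → Fin dH)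

def tau {n : ℕ} (Φs : Fin n → QChannelMap dH dK) (ρ : MatPow dH n) (X : MatPow dK n)
    (z : Wvar dH dK n) : ℂ :=
  ρ z.2.2.1 z.2.2.2 * X z.2.1 z.1
    * ∏ t, Φs t (Matrix.single (z.2.2.1 t) (z.2.2.2 t) 1) (z.1 t) (z.2.1 t)

lemma trace_eq_sum_tau {n : ℕ} (Φs : Fin n → QChannelMap dH dK) (ρ : MatPow dH n)
    (X : MatPow dK n) :
    (tensChan n Φs ρ * X).trace = ∑ z : Wvar dH dK n, tau Φs ρ X z := by
  rw [trace_tensChan_mul, Fintype.sum_prod_type]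
  apply Finset.sum_congr rfl
  intro y _
  rw [Fintype.sum_prod_type]
  apply Finset.sum_congr rfl
  intro y' _
  rw [Fintype.sum_prod_type]
  rfl

def regroup4 {a b c d e f g h i j k l : Type*} :
    ((a × b × c × d) × (e × f × g × h) × (i × j × k × l))
      ≃ ((a × e × i) × (b × f × j) × (c × g × k) × (d × h × l)) where
  toFun := fun z => ((z.1.1, z.2.1.1, z.2.2.1), (z.1.2.1, z.2.1.2.1, z.2.2.2.1),
    (z.1.2.2.1, z.2.1.2.2.1, z.2.2.2.2.1), (z.1.2.2.2, z.2.1.2.2.2, z.2.2.2.2.2))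
  invFun := fun w => ((w.1.1, w.2.1.1, w.2.2.1.1, w.2.2.2.1),
    (w.1.2.1, w.2.1.2.1, w.2.2.1.2.1, w.2.2.2.2.1),
    (w.1.2.2, w.2.1.2.2, w.2.2.1.2.2, w.2.2.2.2.2))
  left_inv := fun _ => rfl
  right_inv := fun _ => rfl

def quadEquiv {p q r n : ℕ} (hn : p + q + r = n) :
    (Wvar dH dK p × Wvar dH dK q × Wvar dH dK r) ≃ Wvar dH dK n :=
  regroup4.trans (Equiv.prodCongr (gfunEquiv hn) (Equiv.prodCongr (gfunEquiv hn)
    (Equiv.prodCongr (gfunEquiv hn) (gfunEquiv hn))))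

lemma sum_prod3 {A B C : Type*} [Fintype A] [Fintype B] [Fintype C]
    (f : A → ℂ) (g : B → ℂ) (h : C → ℂ) :
    ∑ w : A × B × C, f w.1 * g w.2.1 * h w.2.2
      = (∑ a, f a) * (∑ b, g b) * (∑ c, h c) := by
  rw [Fintype.sum_prod_type]
  have hb : ∀ (a : A) (b : B), ∑ c, f a * g b * h c = f a * (g b * ∑ c, h c) := by
    intro a b
    rw [Finset.mul_sum, Finset.mul_sum]
    exact Finset.sum_congr rfl (fun c _ => by ring)
  have ha : ∀ a : A, ∑ bc : B × C, f a * g bc.1 * h bc.2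
      = f a * ((∑ b, g b) * (∑ c, h c)) := by
    intro a
    rw [Fintype.sum_prod_type]
    rw [Finset.sum_congr rfl (fun b _ => hb a b), ← Finset.mul_sum, ← Finset.sum_mul]
  rw [Finset.sum_congr rfl (fun a _ => ha a), ← Finset.sum_mul, mul_assoc]

lemma tau_split {p q r n : ℕ} (hn : p + q + r = n)
    (Φs : Fin n → QChannelMap dH dK) (Φ1 : Fin p → QChannelMap dH dK)
    (Φ2 : Fin q → QChannelMap dH dK) (Φ3 : Fin r → QChannelMap dH dK)
    (hΦ1 : ∀ s, Φs (ge1 p q r n hn s) = Φ1 s)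
    (hΦ2 : ∀ t, Φs (ge2 p q r n hn t) = Φ2 t)
    (hΦ3 : ∀ s, Φs (ge3 p q r n hn s) = Φ3 s)
    (ρn : MatPow dH n) (ρ1 : MatPow dH p) (ρ2 : MatPow dH q) (ρ3 : MatPow dH r)
    (hρ : ∀ x1 x2 x3 x1' x2' x3', ρn (gcombine hn x1 x2 x3) (gcombine hn x1' x2' x3')
      = ρ1 x1 x1' * ρ2 x2 x2' * ρ3 x3 x3')
    (Xn : MatPow dK n) (X1 : MatPow dK p) (X2 : MatPow dK q) (X3 : MatPow dK r)
    (hX : ∀ y1 y2 y3 y1' y2' y3', Xn (gcombine hn y1' y2' y3') (gcombine hn y1 y2 y3)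
      = X1 y1' y1 * X2 y2' y2 * X3 y3' y3)
    (z1 : Wvar dH dK p) (z2 : Wvar dH dK q) (z3 : Wvar dH dK r) :
    tau Φs ρn Xn (quadEquiv hn (z1, z2, z3))
      = tau Φ1 ρ1 X1 z1 * tau Φ2 ρ2 X2 z2 * tau Φ3 ρ3 X3 z3 := by
  obtain ⟨y1, y1', x1, x1'⟩ := z1
  obtain ⟨y2, y2', x2, x2'⟩ := z2
  obtain ⟨y3, y3', x3, x3'⟩ := z3
  show tau Φs ρn Xn (gcombine hn y1 y2 y3, gcombine hn y1' y2' y3',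
      gcombine hn x1 x2 x3, gcombine hn x1' x2' x3') = _
  rw [tau, tau, tau, tau]
  simp only
  rw [hρ, hX]
  rw [gprod_split hn (fun t => Φs t (Matrix.single ((gcombine hn x1 x2 x3) t)
      ((gcombine hn x1' x2' x3') t) 1) ((gcombine hn y1 y2 y3) t)
      ((gcombine hn y1' y2' y3') t))]
  have e1 : ∀ s : Fin p, Φs (ge1 p q r n hn s)
      (Matrix.single ((gcombine hn x1 x2 x3) (ge1 p q r n hn s))
        ((gcombine hn x1' x2' x3') (ge1 p q r n hn s)) 1)
      ((gcombine hn y1 y2 y3) (ge1 p q r n hn s))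
      ((gcombine hn y1' y2' y3') (ge1 p q r n hn s))
      = Φ1 s (Matrix.single (x1 s) (x1' s) 1) (y1 s) (y1' s) := by
    intro s
    rw [hΦ1, gc_ge1 hn, gc_ge1 hn, gc_ge1 hn, gc_ge1 hn]
  have e2 : ∀ t : Fin q, Φs (ge2 p q r n hn t)
      (Matrix.single ((gcombine hn x1 x2 x3) (ge2 p q r n hn t))
        ((gcombine hn x1' x2' x3') (ge2 p q r n hn t)) 1)
      ((gcombine hn y1 y2 y3) (ge2 p q r n hn t))
      ((gcombine hn y1' y2' y3') (ge2 p q r n hn t))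
      = Φ2 t (Matrix.single (x2 t) (x2' t) 1) (y2 t) (y2' t) := by
    intro t
    rw [hΦ2, gc_ge2 hn, gc_ge2 hn, gc_ge2 hn, gc_ge2 hn]
  have e3 : ∀ s : Fin r, Φs (ge3 p q r n hn s)
      (Matrix.single ((gcombine hn x1 x2 x3) (ge3 p q r n hn s))
        ((gcombine hn x1' x2' x3') (ge3 p q r n hn s)) 1)
      ((gcombine hn y1 y2 y3) (ge3 p q r n hn s))
      ((gcombine hn y1' y2' y3') (ge3 p q r n hn s))
      = Φ3 s (Matrix.single (x3 s) (x3' s) 1) (y3 s) (y3' s) := by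
    intro s
    rw [hΦ3, gc_ge3 hn, gc_ge3 hn, gc_ge3 hn, gc_ge3 hn]
  rw [Finset.prod_congr rfl (fun s _ => e1 s), Finset.prod_congr rfl (fun t _ => e2 t),
    Finset.prod_congr rfl (fun s _ => e3 s)]
  ring

lemma trace_split {p q r n : ℕ} (hn : p + q + r = n)
    (Φs : Fin n → QChannelMap dH dK) (Φ1 : Fin p → QChannelMap dH dK)
    (Φ2 : Fin q → QChannelMap dH dK) (Φ3 : Fin r → QChannelMap dH dK)
    (hΦ1 : ∀ s, Φs (ge1 p q r n hn s) = Φ1 s)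
    (hΦ2 : ∀ t, Φs (ge2 p q r n hn t) = Φ2 t)
    (hΦ3 : ∀ s, Φs (ge3 p q r n hn s) = Φ3 s)
    (ρn : MatPow dH n) (ρ1 : MatPow dH p) (ρ2 : MatPow dH q) (ρ3 : MatPow dH r)
    (hρ : ∀ x1 x2 x3 x1' x2' x3', ρn (gcombine hn x1 x2 x3) (gcombine hn x1' x2' x3')
      = ρ1 x1 x1' * ρ2 x2 x2' * ρ3 x3 x3')
    (Xn : MatPow dK n) (X1 : MatPow dK p) (X2 : MatPow dK q) (X3 : MatPow dK r)
    (hX : ∀ y1 y2 y3 y1' y2' y3', Xn (gcombine hn y1' y2' y3') (gcombine hn y1 y2 y3)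
      = X1 y1' y1 * X2 y2' y2 * X3 y3' y3) :
    (tensChan n Φs ρn * Xn).trace
      = (tensChan p Φ1 ρ1 * X1).trace * (tensChan q Φ2 ρ2 * X2).trace
          * (tensChan r Φ3 ρ3 * X3).trace := by
  rw [trace_eq_sum_tau, trace_eq_sum_tau, trace_eq_sum_tau, trace_eq_sum_tau]
  rw [← Equiv.sum_comp (quadEquiv (dH := dH) (dK := dK) hn)]
  rw [← sum_prod3 (fun z1 => tau Φ1 ρ1 X1 z1) (fun z2 => tau Φ2 ρ2 X2 z2)
    (fun z3 => tau Φ3 ρ3 X3 z3)]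
  apply Finset.sum_congr rfl
  intro w _
  obtain ⟨z1, z2, z3⟩ := w
  exact tau_split hn Φs Φ1 Φ2 Φ3 hΦ1 hΦ2 hΦ3 ρn ρ1 ρ2 ρ3 hρ Xn X1 X2 X3 hX z1 z2 z3

end split
section inst
variable {d : ℕ}

lemma pathWt_sum' {I : Type*} [Fintype I] [DecidableEq I] (Q : I → I → ℝ) {Kt : ℕ}
    (hK : 0 < Kt) (a b : I) :
    ∑ v : Fin Kt → I, pathWt Q a v * Q (v ⟨Kt - 1, by omega⟩) b
      = (qMatrix Q ^ (Kt + 1)) a b := by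
  obtain ⟨K, rfl⟩ : ∃ K, Kt = K + 1 := ⟨Kt - 1, by omega⟩
  have h : ∀ v : Fin (K+1) → I, (v ⟨K + 1 - 1, by omega⟩ : I) = v ⟨K, by omega⟩ :=
    fun v => congrArg v (Fin.ext (by simp))
  rw [Finset.sum_congr rfl (fun v _ => by rw [h v])]
  exact pathWt_sum Q K a b

lemma kron_split {l mm kk : ℕ} (ρ : MatPow d l)
    (hb : mm + kk + mm = 2 * mm + kk)
    (hn : mm * l + kk * l + mm * l = (2 * mm + kk) * l)
    (x1 x1' x3 x3' : Fin (mm * l) → Fin d) (x2 x2' : Fin (kk * l) → Fin d) :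
    kronPow (2 * mm + kk) ρ (gcombine hn x1 x2 x3) (gcombine hn x1' x2' x3')
      = kronPow mm ρ x1 x1' * kronPow kk ρ x2 x2' * kronPow mm ρ x3 x3' := by
  have b1 : ∀ (z : Fin (mm*l) → Fin d) (zk : Fin (kk*l) → Fin d) (zm : Fin (mm*l) → Fin d)
      (R : Fin mm) (s : Fin l),
      gcombine hn z zk zm (blockIdx (ge1 mm kk mm (2*mm+kk) hb R) s) = z (blockIdx R s) := by
    intro z zk zm R s
    have hlt : (blockIdx (ge1 mm kk mm (2*mm+kk) hb R) s).val < mm * l := by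
      show R.val * l + s.val < mm * l
      calc R.val * l + s.val < (R.val + 1) * l := by
            rw [Nat.add_mul, Nat.one_mul]; have := s.isLt; omega
        _ ≤ mm * l := Nat.mul_le_mul_right _ R.isLt
    exact (gc_lt hn _ hlt).trans (congrArg z (Fin.ext rfl))
  have b2 : ∀ (z : Fin (mm*l) → Fin d) (zk : Fin (kk*l) → Fin d) (zm : Fin (mm*l) → Fin d)
      (T : Fin kk) (s : Fin l),
      gcombine hn z zk zm (blockIdx (ge2 mm kk mm (2*mm+kk) hb T) s) = zk (blockIdx T s) := by
    intro z zk zm T s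
    have hval : (blockIdx (ge2 mm kk mm (2*mm+kk) hb T) s).val
        = mm * l + (T.val * l + s.val) := by
      show (mm + T.val) * l + s.val = _
      rw [Nat.add_mul]; ring
    have hkk : T.val * l + s.val < kk * l := by
      calc T.val * l + s.val < (T.val + 1) * l := by
            rw [Nat.add_mul, Nat.one_mul]; have := s.isLt; omega
        _ ≤ kk * l := Nat.mul_le_mul_right _ T.isLt
    exact (gc_mid hn _ (by omega) (by omega)).trans
      (congrArg zk (Fin.ext (by simp [blockIdx, ge2, Nat.add_mul] <;> omega)))
  have b3 : ∀ (z : Fin (mm*l) → Fin d) (zk : Fin (kk*l) → Fin d) (zm : Fin (mm*l) → Fin d)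
      (S : Fin mm) (s : Fin l),
      gcombine hn z zk zm (blockIdx (ge3 mm kk mm (2*mm+kk) hb S) s) = zm (blockIdx S s) := by
    intro z zk zm S s
    have hval : (blockIdx (ge3 mm kk mm (2*mm+kk) hb S) s).val
        = (mm * l + kk * l) + (S.val * l + s.val) := by
      show (mm + kk + S.val) * l + s.val = _
      rw [Nat.add_mul, Nat.add_mul]; ring
    exact (gc_hi hn _ (by omega)).trans
      (congrArg zm (Fin.ext (by simp [blockIdx, ge3, Nat.add_mul] <;> omega)))
  show (∏ R : Fin (2*mm+kk), ρ (fun s => gcombine hn x1 x2 x3 (blockIdx R s))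
      (fun s => gcombine hn x1' x2' x3' (blockIdx R s))) = _
  rw [gprod_split hb, ← mul_assoc]
  congr 1
  congr 1
  · exact Finset.prod_congr rfl (fun R _ => by
      rw [show (fun s => gcombine hn x1 x2 x3 (blockIdx (ge1 mm kk mm (2*mm+kk) hb R) s))
          = fun s => x1 (blockIdx R s) from funext (fun s => b1 x1 x2 x3 R s),
        show (fun s => gcombine hn x1' x2' x3' (blockIdx (ge1 mm kk mm (2*mm+kk) hb R) s))
          = fun s => x1' (blockIdx R s) from funext (fun s => b1 x1' x2' x3' R s)])
  · exact Finset.prod_congr rfl (fun T _ => by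
      rw [show (fun s => gcombine hn x1 x2 x3 (blockIdx (ge2 mm kk mm (2*mm+kk) hb T) s))
          = fun s => x2 (blockIdx T s) from funext (fun s => b2 x1 x2 x3 T s),
        show (fun s => gcombine hn x1' x2' x3' (blockIdx (ge2 mm kk mm (2*mm+kk) hb T) s))
          = fun s => x2' (blockIdx T s) from funext (fun s => b2 x1' x2' x3' T s)])
  · exact Finset.prod_congr rfl (fun S _ => by
      rw [show (fun s => gcombine hn x1 x2 x3 (blockIdx (ge3 mm kk mm (2*mm+kk) hb S) s))
          = fun s => x3 (blockIdx S s) from funext (fun s => b3 x1 x2 x3 S s),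
        show (fun s => gcombine hn x1' x2' x3' (blockIdx (ge3 mm kk mm (2*mm+kk) hb S) s))
          = fun s => x3' (blockIdx S s) from funext (fun s => b3 x1' x2' x3' S s)])

lemma threeBlock_split {mm kk l : ℕ} (A B : MatPow d (mm * l))
    (hn : mm * l + kk * l + mm * l = (2 * mm + kk) * l)
    (y1 y1' y3 y3' : Fin (mm * l) → Fin d) (y2 y2' : Fin (kk * l) → Fin d) :
    threeBlock mm kk l A B (gcombine hn y1' y2' y3') (gcombine hn y1 y2 y3)
      = A y1' y1 * (1 : MatPow d (kk * l)) y2' y2 * B y3' y3 := by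
  have g1 : ∀ (z : Fin (mm*l) → Fin d) (zk : Fin (kk*l) → Fin d) (zm : Fin (mm*l) → Fin d)
      (s : Fin (mm*l)) (pf : s.val < (2*mm+kk)*l),
      gcombine hn z zk zm ⟨s.val, pf⟩ = z s := by
    intro z zk zm s pf
    exact (gc_lt hn _ s.isLt).trans (congrArg z (Fin.ext rfl))
  have g2 : ∀ (z : Fin (mm*l) → Fin d) (zk : Fin (kk*l) → Fin d) (zm : Fin (mm*l) → Fin d)
      (t : Fin (kk*l)) (pf : mm * l + t.val < (2*mm+kk)*l),
      gcombine hn z zk zm ⟨mm * l + t.val, pf⟩ = zk t := by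
    intro z zk zm t pf
    exact (gc_mid hn _ (by show mm * l ≤ mm * l + t.val; omega)
      (by show mm * l + t.val < mm * l + kk * l; have := t.isLt; omega)).trans
      (congrArg zk (Fin.ext (by simp)))
  have g3 : ∀ (z : Fin (mm*l) → Fin d) (zk : Fin (kk*l) → Fin d) (zm : Fin (mm*l) → Fin d)
      (s : Fin (mm*l)) (pf : (mm + kk) * l + s.val < (2*mm+kk)*l),
      gcombine hn z zk zm ⟨(mm + kk) * l + s.val, pf⟩ = zm s := by
    intro z zk zm s pf
    have hmk : (mm + kk) * l = mm * l + kk * l := Nat.add_mul _ _ _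
    exact (gc_hi hn _ (by show mm * l + kk * l ≤ (mm + kk) * l + s.val; omega)).trans
      (congrArg zm (Fin.ext (by simp [hmk])))
  simp only [threeBlock, Matrix.of_apply, g1, g2, g3, Matrix.one_apply]

end inst
section main
variable {I : Type} [Fintype I] [DecidableEq I] {dH dK : ℕ}

lemma main_identity (q : I → I → ℝ) (γ : I → ℝ) (Φ : I → QChannelMap dH dK)
    (hΦ : ∀ i, IsCPTP (Φ i)) (l₀ m k : ℕ) (hl₀ : 1 ≤ l₀) (hm : 1 ≤ m) (hk : 1 ≤ k)
    (ρbar : MatPow dH l₀) (hρ : ρbar.trace = 1) (A B : MatPow dK (m * l₀)) :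
    (memChan q γ Φ ((2 * m + k) * l₀) (kronPow (2 * m + k) ρbar)
        * threeBlock m k l₀ A B).trace
      = ∑ u : Fin (m * l₀) → I, ∑ w : Fin (m * l₀) → I,
          ((chainWt q γ u : ℝ) : ℂ)
            * (tensChan (m * l₀) (fun t => Φ (u t)) (kronPow m ρbar) * A).trace
            * (((qMatrix q ^ (k * l₀ + 1))
                (u ⟨m * l₀ - 1, by have := Nat.mul_pos hm hl₀; omega⟩)
                (w ⟨0, Nat.mul_pos hm hl₀⟩) : ℝ) : ℂ)
            * ((stepWt q w : ℝ) : ℂ)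
            * (tensChan (m * l₀) (fun t => Φ (w t)) (kronPow m ρbar) * B).trace := by
  have hM : 0 < m * l₀ := Nat.mul_pos hm hl₀
  have hK : 0 < k * l₀ := Nat.mul_pos hk hl₀
  have hn : m * l₀ + k * l₀ + m * l₀ = (2 * m + k) * l₀ := by ring
  have hb : m + k + m = 2 * m + k := by omega
  rw [trace_memChan_mul]
  rw [gsum_split hn]
  apply Finset.sum_congr rfl
  intro u _
  rw [Finset.sum_comm]
  apply Finset.sum_congr rfl
  intro w _
  have hsplit : ∀ c : Fin (k * l₀) → I,
      (tensChan ((2*m+k)*l₀) (fun t => Φ (gcombine hn u c w t)) (kronPow (2*m+k) ρbar)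
        * threeBlock m k l₀ A B).trace
      = (tensChan (m*l₀) (fun t => Φ (u t)) (kronPow m ρbar) * A).trace
        * (tensChan (k*l₀) (fun t => Φ (c t)) (kronPow k ρbar)
            * (1 : MatPow dK (k*l₀))).trace
        * (tensChan (m*l₀) (fun t => Φ (w t)) (kronPow m ρbar) * B).trace := by
    intro c
    exact trace_split hn _ _ _ _
      (fun s => congrArg Φ (gc_ge1 hn s))
      (fun t => congrArg Φ (gc_ge2 hn t))
      (fun s => congrArg Φ (gc_ge3 hn s))
      _ _ _ _
      (fun x1 x2 x3 x1' x2' x3' => kron_split ρbar hb hn x1 x1' x3 x3' x2 x2')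
      _ _ _ _
      (fun y1 y2 y3 y1' y2' y3' => threeBlock_split A B hn y1 y1' y3 y3' y2 y2')
  have hmid : ∀ c : Fin (k * l₀) → I,
      (tensChan (k*l₀) (fun t => Φ (c t)) (kronPow k ρbar)
        * (1 : MatPow dK (k*l₀))).trace = 1 := by
    intro c
    rw [mul_one, trace_tensChan _ (fun t ρ' => (hΦ (c t)).2 ρ'), trace_kronPow hl₀, hρ,
      one_pow]
  have hw : ∀ c : Fin (k * l₀) → I, chainWt q γ (gcombine hn u c w)
      = chainWt q γ u * pathWt q (u ⟨m * l₀ - 1, by omega⟩) c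
          * (q (c ⟨k * l₀ - 1, by omega⟩) (w ⟨0, hM⟩) * stepWt q w) := by
    intro c
    rw [chainWt_gcombine q γ hn hM hK hM, pathWt_eq q hM]
  calc ∑ c : Fin (k * l₀) → I, (chainWt q γ (gcombine hn u c w) : ℂ)
        * (tensChan ((2*m+k)*l₀) (fun t => Φ (gcombine hn u c w t)) (kronPow (2*m+k) ρbar)
            * threeBlock m k l₀ A B).trace
      = ∑ c : Fin (k * l₀) → I,
          ((chainWt q γ u * pathWt q (u ⟨m * l₀ - 1, by omega⟩) c
              * (q (c ⟨k * l₀ - 1, by omega⟩) (w ⟨0, hM⟩) * stepWt q w) : ℝ) : ℂ)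
            * ((tensChan (m*l₀) (fun t => Φ (u t)) (kronPow m ρbar) * A).trace
               * 1
               * (tensChan (m*l₀) (fun t => Φ (w t)) (kronPow m ρbar) * B).trace) := by
        apply Finset.sum_congr rfl
        intro c _
        rw [hw c, hsplit c, hmid c]
    _ = ((∑ c : Fin (k * l₀) → I, chainWt q γ u * pathWt q (u ⟨m * l₀ - 1, by omega⟩) c
            * (q (c ⟨k * l₀ - 1, by omega⟩) (w ⟨0, hM⟩) * stepWt q w) : ℝ) : ℂ)
          * ((tensChan (m*l₀) (fun t => Φ (u t)) (kronPow m ρbar) * A).trace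
             * 1
             * (tensChan (m*l₀) (fun t => Φ (w t)) (kronPow m ρbar) * B).trace) := by
        rw [← Finset.sum_mul]
        norm_cast
    _ = _ := by
        have hre : (∑ c : Fin (k * l₀) → I, chainWt q γ u
              * pathWt q (u ⟨m * l₀ - 1, by omega⟩) c
              * (q (c ⟨k * l₀ - 1, by omega⟩) (w ⟨0, hM⟩) * stepWt q w))
            = chainWt q γ u * ((qMatrix q ^ (k * l₀ + 1)) (u ⟨m * l₀ - 1, by omega⟩)
                (w ⟨0, hM⟩)) * stepWt q w := by
          calc (∑ c : Fin (k * l₀) → I, chainWt q γ u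
                * pathWt q (u ⟨m * l₀ - 1, by omega⟩) c
                * (q (c ⟨k * l₀ - 1, by omega⟩) (w ⟨0, hM⟩) * stepWt q w))
              = chainWt q γ u * stepWt q w
                * ∑ c : Fin (k * l₀) → I, pathWt q (u ⟨m * l₀ - 1, by omega⟩) c
                  * q (c ⟨k * l₀ - 1, by omega⟩) (w ⟨0, hM⟩) := by
                rw [Finset.mul_sum]
                apply Finset.sum_congr rfl
                intro c _
                ring
            _ = chainWt q γ u * stepWt q w
                * (qMatrix q ^ (k * l₀ + 1)) (u ⟨m * l₀ - 1, by omega⟩) (w ⟨0, hM⟩) := by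
                rw [pathWt_sum' q hK]
            _ = _ := by ring
        rw [hre]
        push_cast
        ring
end main
/-- Strong clustering of the mean output state: expectations of observables with
widely separated supports decouple. -/
theorem mean_output_strongly_clustering {I : Type} [Fintype I] [DecidableEq I] {dH dK : ℕ}
    (q : I → I → ℝ) (γ : I → ℝ) (Φ : I → QChannelMap dH dK)
    (hq : IsStochastic q) (hγ : IsInvariantDist q γ) (hΦ : ∀ i, IsCPTP (Φ i))
    (hirr : IsIrreducibleChain q) (haper : IsAperiodicChain q)
    (l₀ m : ℕ) (hl₀ : 1 ≤ l₀) (hm : 1 ≤ m) (ρbar : MatPow dH l₀) (hρ : IsDensity ρbar)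
    (A B : MatPow dK (m * l₀)) :
    Tendsto (fun k : ℕ =>
        (memChan q γ Φ ((2 * m + k) * l₀) (kronPow (2 * m + k) ρbar) *
          threeBlock m k l₀ A B).trace)
      atTop
      (nhds ((memChan q γ Φ (m * l₀) (kronPow m ρbar) * A).trace *
        (memChan q γ Φ (m * l₀) (kronPow m ρbar) * B).trace)) := by
  have hM : 0 < m * l₀ := Nat.mul_pos hm hl₀
  have hcomp : Tendsto (fun k : ℕ => k * l₀ + 1) atTop atTop :=
    tendsto_atTop_mono
      (fun k => le_trans (Nat.le_mul_of_pos_right k hl₀) (Nat.le_succ _)) tendsto_id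
  have hcast : ∀ a b : I,
      Tendsto (fun k : ℕ => (((qMatrix q ^ (k * l₀ + 1)) a b : ℝ) : ℂ)) atTop
        (nhds ((γ b : ℝ) : ℂ)) := fun a b =>
    (Complex.continuous_ofReal.tendsto _).comp
      ((qpow_tendsto_gamma hq hγ hirr haper a b).comp hcomp)
  have hlim : Tendsto (fun k : ℕ => ∑ u : Fin (m * l₀) → I, ∑ w : Fin (m * l₀) → I,
      ((chainWt q γ u : ℝ) : ℂ)
        * (tensChan (m * l₀) (fun t => Φ (u t)) (kronPow m ρbar) * A).trace
        * (((qMatrix q ^ (k * l₀ + 1))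
            (u ⟨m * l₀ - 1, by have := Nat.mul_pos hm hl₀; omega⟩)
            (w ⟨0, Nat.mul_pos hm hl₀⟩) : ℝ) : ℂ)
        * ((stepWt q w : ℝ) : ℂ)
        * (tensChan (m * l₀) (fun t => Φ (w t)) (kronPow m ρbar) * B).trace)
      atTop
      (nhds (∑ u : Fin (m * l₀) → I, ∑ w : Fin (m * l₀) → I,
        ((chainWt q γ u : ℝ) : ℂ)
          * (tensChan (m * l₀) (fun t => Φ (u t)) (kronPow m ρbar) * A).trace
          * ((γ (w ⟨0, Nat.mul_pos hm hl₀⟩) : ℝ) : ℂ)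
          * ((stepWt q w : ℝ) : ℂ)
          * (tensChan (m * l₀) (fun t => Φ (w t)) (kronPow m ρbar) * B).trace)) := by
    apply tendsto_finset_sum
    intro u _
    apply tendsto_finset_sum
    intro w _
    exact ((((hcast _ _).const_mul _).mul_const _).mul_const _)
  have hfin : (∑ u : Fin (m * l₀) → I, ∑ w : Fin (m * l₀) → I,
      ((chainWt q γ u : ℝ) : ℂ)
        * (tensChan (m * l₀) (fun t => Φ (u t)) (kronPow m ρbar) * A).trace
        * ((γ (w ⟨0, Nat.mul_pos hm hl₀⟩) : ℝ) : ℂ)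
        * ((stepWt q w : ℝ) : ℂ)
        * (tensChan (m * l₀) (fun t => Φ (w t)) (kronPow m ρbar) * B).trace)
      = (memChan q γ Φ (m * l₀) (kronPow m ρbar) * A).trace
        * (memChan q γ Φ (m * l₀) (kronPow m ρbar) * B).trace := by
    rw [trace_memChan_mul q γ Φ (m * l₀) (kronPow m ρbar) A,
      trace_memChan_mul q γ Φ (m * l₀) (kronPow m ρbar) B, Finset.sum_mul_sum]
    apply Finset.sum_congr rfl
    intro u _
    apply Finset.sum_congr rfl
    intro w _
    rw [chainWt_eq q γ hM w]
    push_cast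
    ring
  rw [← hfin]
  apply Tendsto.congr' ?_ hlim
  rw [Filter.eventuallyEq_iff_exists_mem]
  refine ⟨{k | 1 ≤ k}, Filter.mem_atTop 1, fun k hk => ?_⟩
  exact (main_identity q γ Φ hΦ l₀ m k hl₀ hm hk ρbar hρ.2 A B).symm

end
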